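/- Fix an integer k ≥ 1 and distinct primes p₁, ..., p_r, each greater than 3. Then, as X → ∞, ∑_{(a,b) ∈ ℤ², max(4|a|³, 27b²) < X} ∏_{j=1}^{r} ℓ_{p_j}(a, b)^k = 2^{4/3}·3^{−3/2}·X^{5/6} · ∏_{j=1}^{r} α(p_j, k) + O(X^{1/2}), where the implied constant depends only on p₁, ..., p_r and k. -/

import Mathlib

/-- The naive height `h(a,b) = max(4|a|³, 27b²)` of the curve `y² = x³ - ax + b`. -/
def naiveHeight (a b : ℤ) : ℝ :=
  max (4 * |(a : ℝ)| ^ 3) (27 * (b : ℝ) ^ 2)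

/-- `ℓ_p(a,b) = -p^{-1/2} ∑_{x ∈ 𝔽_p} ((x³ - ax + b)/p)`, the normalized `p`-th
coefficient of the curve `y² = x³ - ax + b` mod `p`. -/
noncomputable def ellp (p : ℕ) (hp : p.Prime) (a b : ℤ) : ℝ :=
  -(p : ℝ) ^ (-(1 / 2) : ℝ) *
    ∑ x ∈ Finset.range p, (@legendreSym p ⟨hp⟩ ((x : ℤ) ^ 3 - a * x + b) : ℝ)

/-- `α(p,k) = p^{-2} ∑_{(a,b) ∈ 𝔽_p²} ℓ_p(a,b)^k`. -/
noncomputable def alphaMoment (p : ℕ) (hp : p.Prime) (k : ℕ) : ℝ :=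
  ((p : ℝ) ^ 2)⁻¹ *
    ∑ a ∈ Finset.range p, ∑ b ∈ Finset.range p, ellp p hp (a : ℤ) (b : ℤ) ^ k

open Finset
set_option maxHeartbeats 8000000
lemma legendre_abs_le (p : ℕ) (hp : p.Prime) (a : ℤ) :
    |(@legendreSym p ⟨hp⟩ a : ℝ)| ≤ 1 := by
  haveI : Fact p.Prime := ⟨hp⟩
  rcases eq_or_ne ((a : ZMod p)) 0 with h | h
  · rw [(legendreSym.eq_zero_iff p a).mpr h]; norm_num
  · rcases legendreSym.eq_one_or_neg_one p h with h1 | h1 <;> rw [h1] <;> norm_num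

lemma ellp_abs_le (p : ℕ) (hp : p.Prime) (a b : ℤ) : |ellp p hp a b| ≤ p := by
  unfold ellp
  rw [abs_mul, abs_neg, abs_of_nonneg (Real.rpow_nonneg (by positivity) _)]
  have h1 : (p:ℝ) ^ (-(1/2) : ℝ) ≤ 1 :=
    Real.rpow_le_one_of_one_le_of_nonpos (by exact_mod_cast hp.one_lt.le) (by norm_num)
  have h2 : |∑ x ∈ Finset.range p, (@legendreSym p ⟨hp⟩ ((x : ℤ) ^ 3 - a * x + b) : ℝ)| ≤ p := by
    calc |∑ x ∈ Finset.range p, (@legendreSym p ⟨hp⟩ ((x : ℤ) ^ 3 - a * x + b) : ℝ)|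
        ≤ ∑ x ∈ Finset.range p, |(@legendreSym p ⟨hp⟩ ((x : ℤ) ^ 3 - a * x + b) : ℝ)| :=
          Finset.abs_sum_le_sum_abs _ _
      _ ≤ ∑ _x ∈ Finset.range p, (1:ℝ) :=
          Finset.sum_le_sum fun x _ => legendre_abs_le p hp _
      _ = p := by simp
  calc (p:ℝ) ^ (-(1/2) : ℝ) * |∑ x ∈ Finset.range p, (@legendreSym p ⟨hp⟩ ((x : ℤ) ^ 3 - a * x + b) : ℝ)|
      ≤ 1 * (p:ℝ) := by
        apply mul_le_mul h1 h2 (abs_nonneg _) zero_le_one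
    _ = p := one_mul _

lemma ellp_congr (p : ℕ) (hp : p.Prime) {a a' b b' : ℤ}
    (ha : (a : ZMod p) = (a' : ZMod p)) (hb : (b : ZMod p) = (b' : ZMod p)) :
    ellp p hp a b = ellp p hp a' b' := by
  haveI : Fact p.Prime := ⟨hp⟩
  unfold ellp
  congr 1
  refine Finset.sum_congr rfl fun x _ => ?_
  have h : (((x : ℤ) ^ 3 - a * x + b : ℤ) : ZMod p) = (((x : ℤ) ^ 3 - a' * x + b' : ℤ) : ZMod p) := by
    push_cast
    rw [ha, hb]
  have : @legendreSym p ⟨hp⟩ ((x : ℤ) ^ 3 - a * x + b) = @legendreSym p ⟨hp⟩ ((x : ℤ) ^ 3 - a' * x + b') := by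
    unfold legendreSym
    rw [h]
  rw [this]
lemma sum_Ico_emod (P : ℤ) (hP : 0 < P) (g : ℤ → ℝ) (hg : ∀ a, g (a % P) = g a) (m : ℤ) :
    ∑ a ∈ Finset.Ico m (m + P), g a = ∑ a ∈ Finset.Ico 0 P, g a := by
  have hinj : ∀ x ∈ Finset.Ico m (m + P), ∀ y ∈ Finset.Ico m (m + P), x % P = y % P → x = y := by
    intro x hx y hy hxy
    rw [Finset.mem_Ico] at hx hy
    have hdvd : P ∣ y - x := Int.ModEq.dvd hxy
    have := Int.eq_zero_of_abs_lt_dvd hdvd (by rw [abs_lt]; omega)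
    omega
  have himg : (Finset.Ico m (m + P)).image (· % P) = Finset.Ico 0 P := by
    apply Finset.eq_of_subset_of_card_le
    · intro t ht
      simp only [Finset.mem_image] at ht
      obtain ⟨a, _, rfl⟩ := ht
      rw [Finset.mem_Ico]
      exact ⟨Int.emod_nonneg a hP.ne', Int.emod_lt_of_pos a hP⟩
    · rw [Finset.card_image_of_injOn fun x hx y hy => hinj x (by exact_mod_cast hx) y (by exact_mod_cast hy)]
      simp [Int.card_Ico]
  rw [← himg, Finset.sum_image hinj]
  exact Finset.sum_congr rfl fun a _ => (hg a).symm

lemma sum_Ico_blocks (P : ℤ) (hP : 0 < P) (g : ℤ → ℝ) (hg : ∀ a, g (a % P) = g a) (m : ℤ) (q : ℕ) :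
    ∑ a ∈ Finset.Ico m (m + q * P), g a = q * ∑ a ∈ Finset.Ico 0 P, g a := by
  induction q generalizing m with
  | zero => simp
  | succ n ih =>
    have h1 : m ≤ m + n * P := by nlinarith [hP.le, Int.natCast_nonneg n]
    have h2 : m + (n:ℤ) * P ≤ m + (n+1:ℕ) * P := by push_cast; nlinarith [hP.le]
    rw [show (m + ((n:ℕ)+1:ℕ) * P) = (m + (n:ℤ) * P) + P by push_cast; ring] at h2 ⊢
    rw [← Finset.Ico_union_Ico_eq_Ico h1 h2,
      Finset.sum_union (Finset.Ico_disjoint_Ico_consecutive _ _ _), ih,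
      sum_Ico_emod P hP g hg]
    push_cast
    ring

lemma sum_Ico_approx (P : ℤ) (hP : 0 < P) (g : ℤ → ℝ) (hg : ∀ a, g (a % P) = g a)
    (M : ℝ) (hM : ∀ a, |g a| ≤ M) (l u : ℤ) (hlu : l ≤ u) :
    |∑ a ∈ Finset.Ico l u, g a - ((u - l : ℤ) : ℝ) / (P : ℝ) * ∑ a ∈ Finset.Ico 0 P, g a|
      ≤ 2 * (P : ℝ) * M := by
  have hM0 : 0 ≤ M := le_trans (abs_nonneg _) (hM 0)
  set n : ℤ := u - l with hn
  have hn0 : 0 ≤ n := by omega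
  set q : ℕ := (n / P).toNat with hq
  have hqP : (q : ℤ) = n / P := Int.toNat_of_nonneg (Int.ediv_nonneg hn0 hP.le)
  set r : ℤ := n % P with hr
  have hr0 : 0 ≤ r := Int.emod_nonneg n hP.ne'
  have hrP : r < P := Int.emod_lt_of_pos n hP
  have hnqr : n = q * P + r := by rw [hqP, hr]; linarith [Int.mul_ediv_add_emod n P]
  set m : ℤ := l + q * P with hm
  have hlm : l ≤ m := by nlinarith [hP.le, Int.natCast_nonneg q]
  have hmu : m ≤ u := by omega
  have hsplit : ∑ a ∈ Finset.Ico l u, g a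
      = ∑ a ∈ Finset.Ico l m, g a + ∑ a ∈ Finset.Ico m u, g a := by
    rw [← Finset.Ico_union_Ico_eq_Ico hlm hmu,
      Finset.sum_union (Finset.Ico_disjoint_Ico_consecutive _ _ _)]
  have hblocks : ∑ a ∈ Finset.Ico l m, g a = q * ∑ a ∈ Finset.Ico 0 P, g a :=
    sum_Ico_blocks P hP g hg l q
  set S : ℝ := ∑ a ∈ Finset.Ico 0 P, g a with hS
  have hSbound : |S| ≤ (P : ℝ) * M := by
    calc |S| ≤ ∑ a ∈ Finset.Ico 0 P, |g a| := Finset.abs_sum_le_sum_abs _ _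
      _ ≤ ∑ _a ∈ Finset.Ico 0 P, M := Finset.sum_le_sum fun a _ => hM a
      _ = (P : ℝ) * M := by
          rw [Finset.sum_const, Int.card_Ico, nsmul_eq_mul]
          have h0 : ((P - 0).toNat : ℤ) = P := by omega
          have h1 : (((P - 0).toNat : ℕ) : ℝ) = (P : ℝ) := by exact_mod_cast h0
          rw [h1]
  have hRbound : |∑ a ∈ Finset.Ico m u, g a| ≤ (P : ℝ) * M := by
    calc |∑ a ∈ Finset.Ico m u, g a| ≤ ∑ a ∈ Finset.Ico m u, |g a| := Finset.abs_sum_le_sum_abs _ _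
      _ ≤ ∑ _a ∈ Finset.Ico m u, M := Finset.sum_le_sum fun a _ => hM a
      _ = ((u - m : ℤ) : ℝ) * M := by
          rw [Finset.sum_const, Int.card_Ico, nsmul_eq_mul]
          have h0 : (((u - m).toNat : ℕ) : ℝ) = ((u - m : ℤ) : ℝ) := by
            have : ((u - m).toNat : ℤ) = u - m := by omega
            exact_mod_cast this
          rw [h0]
      _ ≤ (P : ℝ) * M := by
          apply mul_le_mul_of_nonneg_right _ hM0
          have : u - m = r := by omega
          rw [this]
          exact_mod_cast hrP.le
  have hmain : ((n : ℤ) : ℝ) / (P : ℝ) * S = (q : ℝ) * S + ((r : ℤ) : ℝ) / (P : ℝ) * S := by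
    have hP0 : (P : ℝ) ≠ 0 := by exact_mod_cast hP.ne'
    field_simp
    have : ((n : ℤ) : ℝ) = (q : ℝ) * (P : ℝ) + ((r : ℤ) : ℝ) := by exact_mod_cast congrArg (Int.cast : ℤ → ℝ) hnqr
    rw [this]; ring
  rw [hsplit, hblocks, hmain]
  have hfrac : |((r : ℤ) : ℝ) / (P : ℝ) * S| ≤ (P : ℝ) * M := by
    rw [abs_mul, abs_div]
    have h1 : |((r : ℤ) : ℝ)| / |(P : ℝ)| ≤ 1 := by
      rw [div_le_one (abs_pos.mpr (by exact_mod_cast hP.ne' : (P:ℝ) ≠ 0))]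
      rw [abs_of_nonneg (by exact_mod_cast hr0), abs_of_nonneg (by positivity)]
      exact_mod_cast hrP.le
    calc |((r : ℤ) : ℝ)| / |(P : ℝ)| * |S| ≤ 1 * ((P:ℝ) * M) :=
        mul_le_mul h1 hSbound (abs_nonneg _) zero_le_one
      _ = (P:ℝ) * M := one_mul _
  calc |(q : ℝ) * S + ∑ a ∈ Finset.Ico m u, g a - ((q : ℝ) * S + ((r : ℤ) : ℝ) / (P : ℝ) * S)|
      = |∑ a ∈ Finset.Ico m u, g a - ((r : ℤ) : ℝ) / (P : ℝ) * S| := by ring_nf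
    _ ≤ |∑ a ∈ Finset.Ico m u, g a| + |((r : ℤ) : ℝ) / (P : ℝ) * S| := abs_sub _ _
    _ ≤ (P : ℝ) * M + (P : ℝ) * M := add_le_add hRbound hfrac
    _ = 2 * (P : ℝ) * M := by ring

lemma alpha_abs_le (p : ℕ) (hp : p.Prime) (k : ℕ) :
    |alphaMoment p hp k| ≤ (p : ℝ) ^ k := by
  have hp0 : (0:ℝ) < (p:ℝ) := by exact_mod_cast hp.pos
  have hbound : ∀ a b : ℕ, |ellp p hp (a : ℤ) (b : ℤ) ^ k| ≤ (p:ℝ) ^ k := by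
    intro a b
    rw [abs_pow]
    exact pow_le_pow_left₀ (abs_nonneg _) (ellp_abs_le p hp _ _) k
  have hsum : |∑ a ∈ Finset.range p, ∑ b ∈ Finset.range p, ellp p hp (a : ℤ) (b : ℤ) ^ k|
      ≤ (p:ℝ)^2 * (p:ℝ)^k := by
    calc |∑ a ∈ Finset.range p, ∑ b ∈ Finset.range p, ellp p hp (a : ℤ) (b : ℤ) ^ k|
        ≤ ∑ a ∈ Finset.range p, |∑ b ∈ Finset.range p, ellp p hp (a : ℤ) (b : ℤ) ^ k| :=
          Finset.abs_sum_le_sum_abs _ _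
      _ ≤ ∑ _a ∈ Finset.range p, ((p:ℝ) * (p:ℝ)^k) := by
          refine Finset.sum_le_sum fun a _ => ?_
          calc |∑ b ∈ Finset.range p, ellp p hp (a : ℤ) (b : ℤ) ^ k|
              ≤ ∑ b ∈ Finset.range p, |ellp p hp (a : ℤ) (b : ℤ) ^ k| :=
                Finset.abs_sum_le_sum_abs _ _
            _ ≤ ∑ _b ∈ Finset.range p, (p:ℝ)^k := Finset.sum_le_sum fun b _ => hbound a b
            _ = (p:ℝ) * (p:ℝ)^k := by rw [Finset.sum_const, Finset.card_range, nsmul_eq_mul]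
      _ = (p:ℝ) * ((p:ℝ) * (p:ℝ)^k) := by rw [Finset.sum_const, Finset.card_range, nsmul_eq_mul]
      _ = (p:ℝ)^2 * (p:ℝ)^k := by ring
  rw [alphaMoment, abs_mul, abs_inv, abs_of_nonneg (by positivity : (0:ℝ) ≤ (p:ℝ)^2)]
  calc ((p:ℝ)^2)⁻¹ * |∑ a ∈ Finset.range p, ∑ b ∈ Finset.range p, ellp p hp (a : ℤ) (b : ℤ) ^ k|
      ≤ ((p:ℝ)^2)⁻¹ * ((p:ℝ)^2 * (p:ℝ)^k) := by
        apply mul_le_mul_of_nonneg_left hsum (by positivity)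
    _ = (p:ℝ)^k := by field_simp
lemma sum_range_eq_sum_zmod (p : ℕ) [NeZero p] (f : ℕ → ℝ) :
    ∑ a ∈ Finset.range p, f a = ∑ x : ZMod p, f x.val := by
  have hinj : ∀ x ∈ Finset.range p, ∀ y ∈ Finset.range p, ((x : ZMod p) = (y : ZMod p)) → x = y := by
    intro x hx y hy hxy
    rw [Finset.mem_range] at hx hy
    have := congrArg ZMod.val hxy
    rwa [ZMod.val_cast_of_lt hx, ZMod.val_cast_of_lt hy] at this
  have himg : (Finset.range p).image (fun a : ℕ => (a : ZMod p)) = Finset.univ := by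
    apply Finset.eq_of_subset_of_card_le (Finset.subset_univ _)
    rw [Finset.card_image_of_injOn fun x hx y hy => hinj x (by exact_mod_cast hx) y (by exact_mod_cast hy)]
    simp [ZMod.card]
  rw [← himg, Finset.sum_image hinj]
  exact Finset.sum_congr rfl fun a ha => by rw [ZMod.val_cast_of_lt (Finset.mem_range.mp ha)]

lemma crt_sum (k r : ℕ) (p : Fin r → ℕ) (hp : ∀ j, (p j).Prime) (hinj : Function.Injective p) :
    ∑ t ∈ Finset.Ico (0:ℤ) ((∏ j, p j : ℕ) : ℤ), ∑ s ∈ Finset.Ico (0:ℤ) ((∏ j, p j : ℕ) : ℤ),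
      ∏ j, ellp (p j) (hp j) t s ^ k
    = ∏ j, ((p j : ℝ) ^ 2 * alphaMoment (p j) (hp j) k) := by
  classical
  haveI inst : ∀ j, NeZero (p j) := fun j => ⟨(hp j).pos.ne'⟩
  set N : ℕ := ∏ j, p j with hN
  have hNpos : 0 < N := Finset.prod_pos fun j _ => (hp j).pos
  have hcastN : ((N : ℕ) : ℤ) = ∏ j, (p j : ℤ) := by rw [hN]; push_cast; rfl
  -- RHS
  have hRHS : ∀ j, (p j : ℝ) ^ 2 * alphaMoment (p j) (hp j) k
      = ∑ x : ZMod (p j) × ZMod (p j), ellp (p j) (hp j) (x.1.val : ℤ) (x.2.val : ℤ) ^ k := by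
    intro j
    calc (p j : ℝ) ^ 2 * alphaMoment (p j) (hp j) k
        = ∑ a ∈ Finset.range (p j), ∑ b ∈ Finset.range (p j),
            ellp (p j) (hp j) (a : ℤ) (b : ℤ) ^ k := by
          rw [alphaMoment, mul_inv_cancel_left₀ (pow_ne_zero 2 (by exact_mod_cast (hp j).pos.ne'))]
      _ = ∑ x : ZMod (p j), ∑ y : ZMod (p j),
            ellp (p j) (hp j) (x.val : ℤ) (y.val : ℤ) ^ k := by
          rw [sum_range_eq_sum_zmod (p j)
            (fun a => ∑ b ∈ Finset.range (p j), ellp (p j) (hp j) (a : ℤ) (b : ℤ) ^ k)]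
          exact Finset.sum_congr rfl fun x _ => sum_range_eq_sum_zmod (p j) _
      _ = ∑ x : ZMod (p j) × ZMod (p j), ellp (p j) (hp j) (x.1.val : ℤ) (x.2.val : ℤ) ^ k :=
          (Fintype.sum_prod_type (fun x : ZMod (p j) × ZMod (p j) => ellp (p j) (hp j) (x.1.val : ℤ) (x.2.val : ℤ) ^ k)).symm
  have hRHS2 : ∏ j, ((p j : ℝ) ^ 2 * alphaMoment (p j) (hp j) k)
      = ∑ c : ∀ j, ZMod (p j) × ZMod (p j),
          ∏ j, ellp (p j) (hp j) ((c j).1.val : ℤ) ((c j).2.val : ℤ) ^ k := by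
    rw [Finset.prod_congr rfl fun j _ => hRHS j]
    exact Fintype.prod_sum _
  rw [hRHS2]
  -- LHS
  have hsp : ∑ t ∈ Finset.Ico (0:ℤ) (N : ℤ), ∑ s ∈ Finset.Ico (0:ℤ) (N : ℤ),
      ∏ j, ellp (p j) (hp j) t s ^ k
      = ∑ ts ∈ Finset.Ico (0:ℤ) (N : ℤ) ×ˢ Finset.Ico (0:ℤ) (N : ℤ),
          ∏ j, ellp (p j) (hp j) ts.1 ts.2 ^ k :=
      (Finset.sum_product (Finset.Ico (0:ℤ) (N : ℤ)) (Finset.Ico (0:ℤ) (N : ℤ)) (fun ts : ℤ × ℤ => ∏ j, ellp (p j) (hp j) ts.1 ts.2 ^ k)).symm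
  rw [hsp]
  set S2 := Finset.Ico (0:ℤ) (N : ℤ) ×ˢ Finset.Ico (0:ℤ) (N : ℤ) with hS2
  set Φ : ℤ × ℤ → ∀ j, ZMod (p j) × ZMod (p j) :=
    fun ts j => ((ts.1 : ZMod (p j)), (ts.2 : ZMod (p j))) with hΦ
  have hcop : Pairwise (Function.onFun IsCoprime fun j => (p j : ℤ)) := by
    intro i j hij
    have hc : Nat.Coprime (p i) (p j) :=
      (Nat.coprime_primes (hp i) (hp j)).mpr fun h => hij (hinj h)
    exact (Nat.isCoprime_iff_coprime.mpr hc : IsCoprime (p i : ℤ) (p j : ℤ))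
  have hdvdP : ∀ t t' : ℤ, (∀ j, (t : ZMod (p j)) = (t' : ZMod (p j))) → ((N : ℤ) ∣ t - t') := by
    intro t t' h
    rw [hcastN]
    refine Finset.prod_dvd_of_coprime (hcop.set_pairwise _) fun j _ => ?_
    exact Int.ModEq.dvd ((ZMod.intCast_eq_intCast_iff t t' (p j)).mp (h j)).symm
  have hinjΦ : ∀ x ∈ S2, ∀ y ∈ S2, Φ x = Φ y → x = y := by
    intro x hx y hy hxy
    rw [hS2, Finset.mem_product, Finset.mem_Ico, Finset.mem_Ico] at hx hy
    have h1 : (N : ℤ) ∣ x.1 - y.1 :=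
      hdvdP _ _ fun j => congrArg Prod.fst (congrFun hxy j)
    have h2 : (N : ℤ) ∣ x.2 - y.2 :=
      hdvdP _ _ fun j => congrArg Prod.snd (congrFun hxy j)
    have e1 := Int.eq_zero_of_abs_lt_dvd h1 (by rw [abs_lt]; omega)
    have e2 := Int.eq_zero_of_abs_lt_dvd h2 (by rw [abs_lt]; omega)
    exact Prod.ext (by omega) (by omega)
  have hcardS2 : S2.card = N * N := by
    rw [hS2, Finset.card_product, Int.card_Ico]
    simp
  have hcardpi : Fintype.card (∀ j, ZMod (p j) × ZMod (p j)) = N * N := by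
    rw [Fintype.card_pi]
    have h1 : ∀ j, Fintype.card (ZMod (p j) × ZMod (p j)) = p j * p j := by
      intro j
      rw [Fintype.card_prod, ZMod.card]
    rw [Finset.prod_congr rfl fun j _ => h1 j, Finset.prod_mul_distrib, ← hN]
  have himg : S2.image Φ = Finset.univ := by
    apply Finset.eq_of_subset_of_card_le (Finset.subset_univ _)
    rw [Finset.card_image_of_injOn fun x hx y hy =>
      hinjΦ x (by exact_mod_cast hx) y (by exact_mod_cast hy), hcardS2,
      Finset.card_univ, hcardpi]
  rw [← himg, Finset.sum_image hinjΦ]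
  refine Finset.sum_congr rfl fun ts hts => ?_
  refine Finset.prod_congr rfl fun j _ => ?_
  congr 1
  apply ellp_congr
  · rw [Int.cast_natCast]; exact (ZMod.natCast_rightInverse _).symm
  · rw [Int.cast_natCast]; exact (ZMod.natCast_rightInverse _).symm

/-- Moments of products of the coefficients `ℓ_{p_j}(a,b)` over all pairs of height
less than `X`:
`∑_{h(a,b)<X} ∏_j ℓ_{p_j}(a,b)^k = 2^{4/3} 3^{-3/2} X^{5/6} ∏_j α(p_j,k) + O(X^{1/2})`. -/
theorem moments_ellp (k : ℕ) (hk : 1 ≤ k) (r : ℕ) (p : Fin r → ℕ)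
    (hp : ∀ j, (p j).Prime) (hp3 : ∀ j, 3 < p j) (hinj : Function.Injective p) :
    ∃ C : ℝ, 0 < C ∧ ∀ X : ℝ, 1 ≤ X →
      |(∑ᶠ q ∈ {q : ℤ × ℤ | naiveHeight q.1 q.2 < X}, ∏ j, ellp (p j) (hp j) q.1 q.2 ^ k) -
        (2 : ℝ) ^ ((4 / 3 : ℝ)) * (3 : ℝ) ^ (-(3 / 2) : ℝ) * X ^ ((5 / 6 : ℝ)) *
          ∏ j, alphaMoment (p j) (hp j) k|
      ≤ C * X ^ ((1 / 2 : ℝ)) := by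
  classical
  haveI inst : ∀ j, NeZero (p j) := fun j => ⟨(hp j).pos.ne'⟩
  set N : ℕ := ∏ j, p j with hN
  have hNpos : 0 < N := Finset.prod_pos fun j _ => (hp j).pos
  set P : ℤ := (N : ℤ) with hPdef
  have hP : 0 < P := by rw [hPdef]; exact_mod_cast hNpos
  set PR : ℝ := (N : ℝ) with hPRdef
  have hPR1 : 1 ≤ PR := by rw [hPRdef]; exact_mod_cast hNpos
  have hPRc : ((P : ℤ) : ℝ) = PR := by rw [hPdef, hPRdef]; push_cast; rfl
  set M : ℝ := ∏ j, (p j : ℝ) ^ k with hM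
  have hM1 : (1:ℝ) ≤ M := by
    rw [hM]
    calc (1:ℝ) = ∏ _j : Fin r, (1:ℝ) := by simp
      _ ≤ ∏ j, ((p j : ℝ)) ^ k := by
          refine Finset.prod_le_prod (by intros; norm_num) fun j _ => ?_
          apply one_le_pow₀
          exact_mod_cast (hp j).one_lt.le
  have hM0 : (0:ℝ) ≤ M := by linarith
  have hPR0 : (0:ℝ) ≤ PR := by linarith
  set G : ℤ → ℤ → ℝ := fun a b => ∏ j, ellp (p j) (hp j) a b ^ k with hG
  have hGfold : ∀ a b : ℤ, (∏ j, ellp (p j) (hp j) a b ^ k) = G a b := fun a b => rfl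
  have hGbound : ∀ a b, |G a b| ≤ M := by
    intro a b
    rw [hG, hM]
    simp only
    rw [Finset.abs_prod]
    refine Finset.prod_le_prod (fun j _ => abs_nonneg _) fun j _ => ?_
    rw [abs_pow]
    exact pow_le_pow_left₀ (abs_nonneg _) (ellp_abs_le _ _ _ _) k
  have hcastN : ((N : ℕ) : ℤ) = ∏ j, (p j : ℤ) := by rw [hN]; push_cast; rfl
  have hmodcast : ∀ (j : Fin r) (t t' : ℤ), t % P = t' % P →
      ((t : ZMod (p j)) = (t' : ZMod (p j))) := by
    intro j t t' h
    have h1 : P ∣ t' - t := Int.ModEq.dvd h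
    have h2 : ((p j : ℤ)) ∣ t' - t := by
      refine dvd_trans ?_ h1
      rw [hPdef, hcastN]
      exact Finset.dvd_prod_of_mem _ (Finset.mem_univ j)
    exact (ZMod.intCast_eq_intCast_iff t t' (p j)).mpr (Int.modEq_iff_dvd.mpr h2)
  have hGper1 : ∀ b a, G (a % P) b = G a b := by
    intro b a
    exact Finset.prod_congr rfl fun j _ => by
      rw [ellp_congr (p j) (hp j) (hmodcast j _ a (Int.emod_emod_of_dvd a dvd_rfl)) rfl]
  have hGper2 : ∀ a b, G a (b % P) = G a b := by
    intro a b
    exact Finset.prod_congr rfl fun j _ => by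
      rw [ellp_congr (p j) (hp j) rfl (hmodcast j _ b (Int.emod_emod_of_dvd b dvd_rfl))]
  -- the full-period double sum
  set S0 : ℝ := ∑ t ∈ Finset.Ico (0:ℤ) P, ∑ s ∈ Finset.Ico (0:ℤ) P, G t s with hS0
  have hS0val : S0 = PR^2 * ∏ j, alphaMoment (p j) (hp j) k := by
    rw [hS0]
    have := crt_sum k r p hp hinj
    rw [← hN] at this
    rw [hPdef]
    simp only [hG]
    rw [this, Finset.prod_mul_distrib]
    congr 1
    rw [Finset.prod_pow]
    congr 1
    rw [hPRdef, hN]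
    push_cast
    rfl
  -- the constant
  refine ⟨12 * PR * M + 5 * M + 1, by positivity, ?_⟩
  intro X hX
  have hX0 : (0:ℝ) < X := by linarith
  set y : ℝ := (X / 4) ^ ((1:ℝ)/3) with hydef
  set z : ℝ := (X / 27) ^ ((1:ℝ)/2) with hzdef
  have hy0 : 0 < y := Real.rpow_pos_of_pos (by linarith) _
  have hz0 : 0 < z := Real.rpow_pos_of_pos (by linarith) _
  set A : ℤ := ⌈y⌉ - 1 with hAdef
  set B : ℤ := ⌈z⌉ - 1 with hBdef
  have hA0 : 0 ≤ A := by
    have : (0:ℤ) < ⌈y⌉ := Int.ceil_pos.mpr hy0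
    omega
  have hB0 : 0 ≤ B := by
    have : (0:ℤ) < ⌈z⌉ := Int.ceil_pos.mpr hz0
    omega
  -- identify the summation region
  have hy3 : y ^ (3:ℕ) = X / 4 := by
    rw [hydef, ← Real.rpow_natCast ((X/4) ^ ((1:ℝ)/3)) 3, ← Real.rpow_mul (by positivity)]
    norm_num
  have hz2 : z ^ (2:ℕ) = X / 27 := by
    rw [hzdef, ← Real.rpow_natCast ((X/27) ^ ((1:ℝ)/2)) 2, ← Real.rpow_mul (by positivity)]
    norm_num
  have hya : ∀ a : ℤ, 4 * |(a:ℝ)| ^ 3 < X ↔ (-A ≤ a ∧ a < A + 1) := by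
    intro a
    have h1 : 4 * |(a:ℝ)| ^ 3 < X ↔ |(a:ℝ)| ^ (3:ℕ) < y ^ (3:ℕ) := by
      rw [hy3]
      constructor <;> intro h <;> linarith
    have h2 : |(a:ℝ)| ^ (3:ℕ) < y ^ (3:ℕ) ↔ |(a:ℝ)| < y :=
      pow_lt_pow_iff_left₀ (abs_nonneg _) hy0.le (by norm_num)
    have h3 : |(a:ℝ)| = ((|a| : ℤ) : ℝ) := by push_cast; rfl
    have h4 : ((|a| : ℤ) : ℝ) < y ↔ |a| < ⌈y⌉ := Int.lt_ceil.symm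
    rw [h1, h2, h3, h4, abs_lt]
    omega
  have hzb : ∀ b : ℤ, 27 * ((b:ℝ)) ^ 2 < X ↔ (-B ≤ b ∧ b < B + 1) := by
    intro b
    have h0 : ((b:ℝ)) ^ 2 = |(b:ℝ)| ^ (2:ℕ) := (sq_abs _).symm
    have h1 : 27 * ((b:ℝ)) ^ 2 < X ↔ |(b:ℝ)| ^ (2:ℕ) < z ^ (2:ℕ) := by
      rw [hz2, ← h0]
      constructor <;> intro h <;> linarith
    have h2 : |(b:ℝ)| ^ (2:ℕ) < z ^ (2:ℕ) ↔ |(b:ℝ)| < z :=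
      pow_lt_pow_iff_left₀ (abs_nonneg _) hz0.le (by norm_num)
    have h3 : |(b:ℝ)| = ((|b| : ℤ) : ℝ) := by push_cast; rfl
    have h4 : ((|b| : ℤ) : ℝ) < z ↔ |b| < ⌈z⌉ := Int.lt_ceil.symm
    rw [h1, h2, h3, h4, abs_lt]
    omega
  have hset : {q : ℤ × ℤ | naiveHeight q.1 q.2 < X}
      = ↑(Finset.Ico (-A) (A+1) ×ˢ Finset.Ico (-B) (B+1)) := by
    ext q
    simp only [Set.mem_setOf_eq, naiveHeight, max_lt_iff, Finset.coe_product,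
      Set.mem_prod, Finset.mem_coe, Finset.mem_Ico]
    rw [hya q.1, hzb q.2]
  rw [hset, finsum_mem_coe_finset,
    Finset.sum_product (Finset.Ico (-A) (A+1)) (Finset.Ico (-B) (B+1))
      (fun q : ℤ × ℤ => ∏ j, ellp (p j) (hp j) q.1 q.2 ^ k)]
  simp only [hGfold]
  -- interval lengths
  set na : ℝ := 2 * (A:ℝ) + 1 with hnadef
  set nb : ℝ := 2 * (B:ℝ) + 1 with hnbdef
  have hnacast : ((A + 1 - (-A) : ℤ) : ℝ) = na := by rw [hnadef]; push_cast; ring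
  have hnbcast : ((B + 1 - (-B) : ℤ) : ℝ) = nb := by rw [hnbdef]; push_cast; ring
  have hna1 : 1 ≤ na := by
    rw [hnadef]
    have : (0:ℝ) ≤ (A:ℝ) := by exact_mod_cast hA0
    linarith
  have hnb1 : 1 ≤ nb := by
    rw [hnbdef]
    have : (0:ℝ) ≤ (B:ℝ) := by exact_mod_cast hB0
    linarith
  -- inner-sum approximations
  set Sig2 : ℤ → ℝ := fun a => ∑ s ∈ Finset.Ico (0:ℤ) P, G a s with hSig2
  have hstep1 : ∀ a : ℤ, |∑ b ∈ Finset.Ico (-B) (B+1), G a b - nb / PR * Sig2 a|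
      ≤ 2 * PR * M := by
    intro a
    have := sum_Ico_approx P hP (fun b => G a b) (hGper2 a) M (fun b => hGbound a b)
      (-B) (B+1) (by omega)
    rwa [hnbcast, hPRc] at this
  have hSig2per : ∀ a, Sig2 (a % P) = Sig2 a := by
    intro a
    rw [hSig2]
    exact Finset.sum_congr rfl fun s _ => hGper1 s a
  have hSig2bound : ∀ a, |Sig2 a| ≤ PR * M := by
    intro a
    rw [hSig2]
    calc |∑ s ∈ Finset.Ico (0:ℤ) P, G a s| ≤ ∑ s ∈ Finset.Ico (0:ℤ) P, |G a s| :=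
        Finset.abs_sum_le_sum_abs _ _
      _ ≤ ∑ _s ∈ Finset.Ico (0:ℤ) P, M := Finset.sum_le_sum fun s _ => hGbound a s
      _ = PR * M := by
          rw [Finset.sum_const, Int.card_Ico, nsmul_eq_mul]
          have h0 : ((P - 0).toNat : ℤ) = P := by omega
          have h1 : (((P - 0).toNat : ℕ) : ℝ) = PR := by rw [← hPRc]; exact_mod_cast h0
          rw [h1]
  have hstep2 : |∑ a ∈ Finset.Ico (-A) (A+1), Sig2 a - na / PR * S0| ≤ 2 * PR * (PR * M) := by
    have := sum_Ico_approx P hP Sig2 hSig2per (PR * M) hSig2bound (-A) (A+1) (by omega)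
    rwa [hnacast, hPRc] at this
  -- combine
  have hstep1sum : |∑ a ∈ Finset.Ico (-A) (A+1), ∑ b ∈ Finset.Ico (-B) (B+1), G a b
      - nb / PR * ∑ a ∈ Finset.Ico (-A) (A+1), Sig2 a| ≤ na * (2 * PR * M) := by
    have he : ∑ a ∈ Finset.Ico (-A) (A+1), ∑ b ∈ Finset.Ico (-B) (B+1), G a b
        - nb / PR * ∑ a ∈ Finset.Ico (-A) (A+1), Sig2 a
        = ∑ a ∈ Finset.Ico (-A) (A+1),
            (∑ b ∈ Finset.Ico (-B) (B+1), G a b - nb / PR * Sig2 a) := by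
      rw [Finset.sum_sub_distrib, Finset.mul_sum]
    rw [he]
    calc |∑ a ∈ Finset.Ico (-A) (A+1), (∑ b ∈ Finset.Ico (-B) (B+1), G a b - nb / PR * Sig2 a)|
        ≤ ∑ a ∈ Finset.Ico (-A) (A+1), |∑ b ∈ Finset.Ico (-B) (B+1), G a b - nb / PR * Sig2 a| :=
          Finset.abs_sum_le_sum_abs _ _
      _ ≤ ∑ _a ∈ Finset.Ico (-A) (A+1), (2 * PR * M) := Finset.sum_le_sum fun a _ => hstep1 a
      _ = na * (2 * PR * M) := by
          rw [Finset.sum_const, Int.card_Ico, nsmul_eq_mul]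
          have h0 : (((A + 1 - (-A)).toNat : ℕ) : ℝ) = na := by
            rw [← hnacast]
            have : ((A + 1 - (-A)).toNat : ℤ) = A + 1 - (-A) := by omega
            exact_mod_cast this
          rw [h0]
  have hT : |∑ a ∈ Finset.Ico (-A) (A+1), ∑ b ∈ Finset.Ico (-B) (B+1), G a b
      - na * nb * ∏ j, alphaMoment (p j) (hp j) k|
      ≤ 2 * na * PR * M + 2 * nb * PR * M := by
    have hPRne : PR ≠ 0 := by linarith
    have hmain : nb / PR * (na / PR * S0) = na * nb * ∏ j, alphaMoment (p j) (hp j) k := by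
      rw [hS0val]
      field_simp
      try ring
    have h1 : |nb / PR * ∑ a ∈ Finset.Ico (-A) (A+1), Sig2 a - nb / PR * (na / PR * S0)|
        ≤ nb / PR * (2 * PR * (PR * M)) := by
      rw [← mul_sub, abs_mul, abs_of_nonneg (by positivity : (0:ℝ) ≤ nb / PR)]
      exact mul_le_mul_of_nonneg_left hstep2 (by positivity)
    have h2 : nb / PR * (2 * PR * (PR * M)) = 2 * nb * PR * M := by
      field_simp
      try ring
    calc |∑ a ∈ Finset.Ico (-A) (A+1), ∑ b ∈ Finset.Ico (-B) (B+1), G a b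
        - na * nb * ∏ j, alphaMoment (p j) (hp j) k|
        ≤ |∑ a ∈ Finset.Ico (-A) (A+1), ∑ b ∈ Finset.Ico (-B) (B+1), G a b
            - nb / PR * ∑ a ∈ Finset.Ico (-A) (A+1), Sig2 a|
          + |nb / PR * ∑ a ∈ Finset.Ico (-A) (A+1), Sig2 a
            - na * nb * ∏ j, alphaMoment (p j) (hp j) k| := by
          exact abs_sub_le _ _ _
      _ ≤ na * (2 * PR * M) + (2 * nb * PR * M) := by
          refine add_le_add hstep1sum ?_
          rw [← hmain, ← h2]
          exact h1
      _ = 2 * na * PR * M + 2 * nb * PR * M := by ring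
    -- compare na*nb with 4yz
  have hceily1 : y ≤ ((⌈y⌉ : ℤ) : ℝ) := Int.le_ceil y
  have hceily2 : ((⌈y⌉ : ℤ) : ℝ) < y + 1 := Int.ceil_lt_add_one y
  have hceilz1 : z ≤ ((⌈z⌉ : ℤ) : ℝ) := Int.le_ceil z
  have hceilz2 : ((⌈z⌉ : ℤ) : ℝ) < z + 1 := Int.ceil_lt_add_one z
  have hAcast : (A:ℝ) = ((⌈y⌉ : ℤ) : ℝ) - 1 := by rw [hAdef]; push_cast; ring
  have hBcast : (B:ℝ) = ((⌈z⌉ : ℤ) : ℝ) - 1 := by rw [hBdef]; push_cast; ring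
  have hna : |na - 2*y| ≤ 1 := by
    rw [hnadef, hAcast, abs_le]
    constructor <;> linarith
  have hnb : |nb - 2*z| ≤ 1 := by
    rw [hnbdef, hBcast, abs_le]
    constructor <;> linarith
  have hna' := abs_le.mp hna
  have hnb' := abs_le.mp hnb
  have h5 : |na * nb - 4 * (y * z)| ≤ 2*y + 2*z + 1 := by
    have hnb0 : (0:ℝ) ≤ nb := by linarith
    have e : na * nb - 4 * (y * z) = (na - 2*y) * nb + (2*y) * (nb - 2*z) := by ring
    have u1 : (na - 2*y) * nb ≤ 1 * nb := mul_le_mul_of_nonneg_right (by linarith [hna'.2]) hnb0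
    have u2 : (-1) * nb ≤ (na - 2*y) * nb := mul_le_mul_of_nonneg_right (by linarith [hna'.1]) hnb0
    have u3 : (2*y) * (nb - 2*z) ≤ (2*y) * 1 := mul_le_mul_of_nonneg_left (by linarith [hnb'.2]) (by linarith)
    have u4 : (2*y) * (-1) ≤ (2*y) * (nb - 2*z) := mul_le_mul_of_nonneg_left (by linarith [hnb'.1]) (by linarith)
    have hnbz : nb ≤ 2*z + 1 := by linarith [hnb'.2]
    rw [e, abs_le]
    constructor
    · linarith
    · linarith
  have halpha : |∏ j, alphaMoment (p j) (hp j) k| ≤ M := by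
    rw [Finset.abs_prod, hM]
    exact Finset.prod_le_prod (fun j _ => abs_nonneg _) fun j _ => alpha_abs_le (p j) (hp j) k
  -- the power identity
  have h2r : ((2:ℝ)) ^ (2:ℝ) = 4 := by
    calc ((2:ℝ)) ^ (2:ℝ) = ((2:ℝ)) ^ ((2:ℕ):ℝ) := by norm_num
      _ = ((2:ℝ)) ^ (2:ℕ) := Real.rpow_natCast 2 2
      _ = 4 := by norm_num
  have h3r : ((3:ℝ)) ^ (3:ℝ) = 27 := by
    calc ((3:ℝ)) ^ (3:ℝ) = ((3:ℝ)) ^ ((3:ℕ):ℝ) := by norm_num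
      _ = ((3:ℝ)) ^ (3:ℕ) := Real.rpow_natCast 3 3
      _ = 27 := by norm_num
  have hy' : y = X ^ ((1:ℝ)/3) * ((2:ℝ)) ^ (-(2/3):ℝ) := by
    have e : X / 4 = X * ((2:ℝ) ^ (2:ℝ))⁻¹ := by rw [h2r]; ring
    rw [hydef, e, Real.mul_rpow hX0.le (by positivity), Real.inv_rpow (by positivity),
      ← Real.rpow_mul (by norm_num : (0:ℝ) ≤ 2), ← Real.rpow_neg (by norm_num : (0:ℝ) ≤ 2)]
    norm_num
  have hz' : z = X ^ ((1:ℝ)/2) * ((3:ℝ)) ^ (-(3/2):ℝ) := by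
    have e : X / 27 = X * ((3:ℝ) ^ (3:ℝ))⁻¹ := by rw [h3r]; ring
    rw [hzdef, e, Real.mul_rpow hX0.le (by positivity), Real.inv_rpow (by positivity),
      ← Real.rpow_mul (by norm_num : (0:ℝ) ≤ 3), ← Real.rpow_neg (by norm_num : (0:ℝ) ≤ 3)]
    norm_num
  have hX56 : X ^ ((1:ℝ)/3) * X ^ ((1:ℝ)/2) = X ^ ((5/6:ℝ)) := by
    rw [← Real.rpow_add hX0]
    norm_num
  have h24 : (4:ℝ) * ((2:ℝ)) ^ (-(2/3):ℝ) = (2:ℝ) ^ ((4/3):ℝ) := by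
    rw [← h2r, ← Real.rpow_add (by norm_num : (0:ℝ) < 2)]
    norm_num
  have hyz : 4 * (y * z) = (2:ℝ) ^ ((4/3:ℝ)) * (3:ℝ) ^ (-(3/2):ℝ) * X ^ ((5/6:ℝ)) := by
    rw [hy', hz']
    calc 4 * ((X ^ ((1:ℝ)/3) * ((2:ℝ)) ^ (-(2/3):ℝ)) * (X ^ ((1:ℝ)/2) * ((3:ℝ)) ^ (-(3/2):ℝ)))
        = (4 * ((2:ℝ)) ^ (-(2/3):ℝ)) * (X ^ ((1:ℝ)/3) * X ^ ((1:ℝ)/2)) * ((3:ℝ)) ^ (-(3/2):ℝ) := by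
          ring
      _ = (2:ℝ) ^ ((4/3):ℝ) * X ^ ((5/6:ℝ)) * ((3:ℝ)) ^ (-(3/2):ℝ) := by rw [h24, hX56]
      _ = (2:ℝ) ^ ((4/3:ℝ)) * (3:ℝ) ^ (-(3/2):ℝ) * X ^ ((5/6:ℝ)) := by ring
  -- bounds by X^(1/2)
  have hXh0 : (0:ℝ) ≤ X ^ ((1/2:ℝ)) := Real.rpow_nonneg hX0.le _
  have hXh1 : (1:ℝ) ≤ X ^ ((1/2:ℝ)) := by
    have := Real.rpow_le_rpow (by norm_num : (0:ℝ) ≤ 1) hX (by norm_num : (0:ℝ) ≤ (1/2:ℝ))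
    rwa [Real.one_rpow] at this
  have hyX : y ≤ X ^ ((1/2:ℝ)) := by
    have h1 : y ≤ X ^ ((1:ℝ)/3) := by
      rw [hydef]
      exact Real.rpow_le_rpow (by positivity) (by linarith) (by norm_num)
    have h2 : X ^ ((1:ℝ)/3) ≤ X ^ ((1/2:ℝ)) :=
      Real.rpow_le_rpow_of_exponent_le hX (by norm_num)
    linarith
  have hzX : z ≤ X ^ ((1/2:ℝ)) := by
    have h1 : z ≤ X ^ ((1:ℝ)/2) := by
      rw [hzdef]
      exact Real.rpow_le_rpow (by positivity) (by linarith) (by norm_num)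
    have h2 : X ^ ((1:ℝ)/2) ≤ X ^ ((1/2:ℝ)) := by norm_num
    linarith
  have hnaX : na ≤ 3 * X ^ ((1/2:ℝ)) := by linarith
  have hnbX : nb ≤ 3 * X ^ ((1/2:ℝ)) := by linarith
  -- final chain
  have hmainterm : (2:ℝ) ^ ((4/3:ℝ)) * (3:ℝ) ^ (-(3/2):ℝ) * X ^ ((5/6:ℝ))
      * ∏ j, alphaMoment (p j) (hp j) k
      = 4 * (y * z) * ∏ j, alphaMoment (p j) (hp j) k := by rw [hyz]
  rw [hmainterm]
  have hfinal1 : |na * nb * ∏ j, alphaMoment (p j) (hp j) k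
      - 4 * (y * z) * ∏ j, alphaMoment (p j) (hp j) k| ≤ (2*y + 2*z + 1) * M := by
    rw [← sub_mul, abs_mul]
    apply mul_le_mul h5 halpha (abs_nonneg _) (by positivity)
  calc |∑ a ∈ Finset.Ico (-A) (A+1), ∑ b ∈ Finset.Ico (-B) (B+1), G a b
      - 4 * (y * z) * ∏ j, alphaMoment (p j) (hp j) k|
      ≤ |∑ a ∈ Finset.Ico (-A) (A+1), ∑ b ∈ Finset.Ico (-B) (B+1), G a b
          - na * nb * ∏ j, alphaMoment (p j) (hp j) k|
        + |na * nb * ∏ j, alphaMoment (p j) (hp j) k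
          - 4 * (y * z) * ∏ j, alphaMoment (p j) (hp j) k| := abs_sub_le _ _ _
    _ ≤ (2 * na * PR * M + 2 * nb * PR * M) + (2*y + 2*z + 1) * M := add_le_add hT hfinal1
    _ ≤ (2 * (3 * X ^ ((1/2:ℝ))) * PR * M + 2 * (3 * X ^ ((1/2:ℝ))) * PR * M)
        + (2 * X ^ ((1/2:ℝ)) + 2 * X ^ ((1/2:ℝ)) + X ^ ((1/2:ℝ))) * M := by
        gcongr
    _ = (12 * PR * M + 5 * M) * X ^ ((1/2:ℝ)) := by ring
    _ ≤ (12 * PR * M + 5 * M + 1) * X ^ ((1/2:ℝ)) := by linarith [hXh0]
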